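/- A real number x is a quadratic irrational if and only if its '−' continued fraction expansion (with partial quotients bᵢ ≥ 2 for i ≥ 1) is eventually periodic. -/

import Mathlib

/-- Iterates of the minus continued fraction algorithm. -/
noncomputable def mIter (x : ℝ) (n : ℕ) : ℝ := (fun y => ((⌈y⌉ : ℝ) - y)⁻¹)^[n] x

/-- The n-th partial quotient of the minus continued fraction of x. -/
noncomputable def mDigit (x : ℝ) (n : ℕ) : ℤ := ⌈mIter x n⌉

lemma mIter_zero (x : ℝ) : mIter x 0 = x := rfl

lemma mIter_succ (x : ℝ) (n : ℕ) :
    mIter x (n+1) = ((mDigit x n : ℝ) - mIter x n)⁻¹ := by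
  simp [mIter, mDigit, Function.iterate_succ_apply']

lemma mIter_add (x : ℝ) (m n : ℕ) : mIter x (m + n) = mIter (mIter x m) n := by
  simp [mIter, add_comm m n, Function.iterate_add_apply]

lemma mDigit_add (x : ℝ) (m n : ℕ) : mDigit x (m + n) = mDigit (mIter x m) n := by
  simp [mDigit, mIter_add]

lemma ceil_sub_pos {w : ℝ} (hw : Irrational w) : 0 < (⌈w⌉ : ℝ) - w := by
  have h := Int.le_ceil w
  have : w ≠ (⌈w⌉ : ℝ) := (hw.ne_int _)
  rcases lt_or_eq_of_le h with h' | h'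
  · linarith
  · exact absurd h' this

lemma ceil_sub_lt_one (w : ℝ) : (⌈w⌉ : ℝ) - w < 1 := by
  have := Int.ceil_lt_add_one w; linarith

lemma irrational_mIter {x : ℝ} (hx : Irrational x) (n : ℕ) : Irrational (mIter x n) := by
  induction n with
  | zero => exact hx
  | succ n ih =>
    rw [mIter_succ]
    exact (ih.intCast_sub _).inv

lemma one_lt_mIter {x : ℝ} (hx : Irrational x) {n : ℕ} (hn : 1 ≤ n) : 1 < mIter x n := by
  obtain ⟨m, rfl⟩ := Nat.exists_eq_add_of_le hn
  rw [add_comm, mIter_succ]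
  rw [one_lt_inv_iff₀]
  refine ⟨ceil_sub_pos (irrational_mIter hx m), ceil_sub_lt_one _⟩

lemma two_le_mDigit {x : ℝ} (hx : Irrational x) {n : ℕ} (hn : 1 ≤ n) : 2 ≤ mDigit x n := by
  have h := one_lt_mIter hx hn
  have : (1:ℤ) < ⌈mIter x n⌉ := by
    rw [Int.lt_ceil]; exact_mod_cast h
  unfold mDigit; omega

lemma mIter_mem_Ioo {x : ℝ} (hx : Irrational x) (n : ℕ) :
    (mDigit x n : ℝ) - 1 < mIter x n ∧ mIter x n < (mDigit x n : ℝ) := by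
  have h1 := ceil_sub_pos (irrational_mIter hx n)
  have h2 := ceil_sub_lt_one (mIter x n)
  unfold mDigit
  constructor <;> linarith
-- growth contradiction lemma
lemma growth_contra (e : ℕ → ℝ) (h0 : 0 < e 0) (hlt : ∀ n, e n < 1)
    (hstep : ∀ n, e n * (1 + e n) ≤ e (n+1)) : False := by
  have hpos : ∀ n, 0 < e n := by
    intro n; induction n with
    | zero => exact h0
    | succ n ih =>
      have := hstep n
      nlinarith
  have hmono : ∀ n, e 0 ≤ e n := by
    intro n; induction n with
    | zero => exact le_refl _
    | succ n ih =>
      have h1 := hstep n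
      have h2 := hpos n
      nlinarith
  have hgeom : ∀ n, e 0 * (1 + e 0)^n ≤ e n := by
    intro n; induction n with
    | zero => simp
    | succ n ih =>
      have h1 := hstep n
      have h2 := hmono n
      have h3 := hpos n
      calc e 0 * (1 + e 0)^(n+1) = (e 0 * (1 + e 0)^n) * (1 + e 0) := by ring
        _ ≤ e n * (1 + e 0) := by nlinarith [pow_pos (by linarith : (0:ℝ) < 1 + e 0) n]
        _ ≤ e n * (1 + e n) := by nlinarith
        _ ≤ e (n+1) := h1
  -- Bernoulli: (1+e0)^n ≥ 1 + n e0
  obtain ⟨n, hn⟩ := exists_nat_gt ((1 - e 0) / (e 0 * e 0))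
  have hb : (1 : ℝ) + n * e 0 ≤ (1 + e 0)^n := by
    have := one_add_mul_le_pow (a := e 0) (by linarith) n
    linarith [this]
  have h4 := hgeom n
  have h5 := hlt n
  have : (1 - e 0) / (e 0 * e 0) * (e 0 * e 0) < n * (e 0 * e 0) := by
    apply mul_lt_mul_of_pos_right hn (by positivity)
  rw [div_mul_cancel₀] at this
  · nlinarith
  · positivity

lemma rat_iter_zero : ∀ q : ℕ, 0 < q → ∀ p : ℤ, ∃ n, mIter ((p:ℝ)/(q:ℝ)) (n+1) = 0 := by
  intro q
  induction q using Nat.strong_induction_on with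
  | _ q ih =>
    intro hq p
    set w : ℝ := (p:ℝ)/(q:ℝ) with hwdef
    have hq0 : (q:ℝ) ≠ 0 := by positivity
    have hw1 : mIter w 1 = ((⌈w⌉:ℝ) - w)⁻¹ := by
      rw [mIter_succ]
      simp [mDigit, mIter_zero]
    by_cases hc : (⌈w⌉:ℝ) - w = 0
    · exact ⟨0, by rw [hw1, hc, inv_zero]⟩
    · have hu : 0 < (⌈w⌉:ℝ) - w := by
        have := Int.le_ceil w
        rcases lt_or_eq_of_le this with h | h
        · linarith
        · exact absurd (by linarith : (⌈w⌉:ℝ) - w = 0) hc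
      have hu1 : (⌈w⌉:ℝ) - w < 1 := ceil_sub_lt_one w
      set m : ℤ := ⌈w⌉ * q - p with hm
      have hmr : (⌈w⌉:ℝ) - w = (m:ℝ)/(q:ℝ) := by
        rw [hwdef, hm]
        push_cast
        field_simp
        rw [← hwdef]
      have hm0 : 0 < m := by
        have : 0 < (m:ℝ)/(q:ℝ) := hmr ▸ hu
        have hq0' : (0:ℝ) < q := by positivity
        have := (div_pos_iff_of_pos_right hq0').mp this
        exact_mod_cast this
      have hmq : m < q := by
        have h1 : (m:ℝ)/(q:ℝ) < 1 := hmr ▸ hu1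
        have hq0' : (0:ℝ) < q := by positivity
        rw [div_lt_one hq0'] at h1
        exact_mod_cast h1
      have hw1' : mIter w 1 = ((q:ℤ):ℝ)/((m.toNat : ℕ):ℝ) := by
        rw [hw1, hmr, inv_div]
        have h2 : ((m.toNat : ℕ):ℝ) = (m:ℝ) := by
          rw [← Int.cast_natCast, Int.toNat_of_nonneg (le_of_lt hm0)]
        rw [h2]
        push_cast
        ring
      obtain ⟨n, hn⟩ := ih m.toNat (by omega) (by omega) (q:ℤ)
      refine ⟨n+1, ?_⟩
      have : mIter w (1 + (n+1)) = mIter (mIter w 1) (n+1) := mIter_add w 1 (n+1)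
      rw [show n+1+1 = 1+(n+1) by ring, this, hw1', hn]

lemma exists_digit_zero_of_not_irrational {x : ℝ} (h : ¬ Irrational x) :
    ∃ i, 1 ≤ i ∧ mDigit x i = 0 := by
  rw [Irrational] at h
  obtain ⟨r, rfl⟩ := not_not.mp h
  have hx : ((r:ℝ)) = ((r.num:ℝ))/((r.den:ℝ)) := by
    rw [Rat.cast_def]
  obtain ⟨n, hn⟩ := rat_iter_zero r.den r.pos r.num
  rw [← hx] at hn
  exact ⟨n+1, by omega, by rw [mDigit, hn, Int.ceil_zero]⟩

lemma eq_of_mDigit_eq {v w : ℝ} (hv : Irrational v) (hw : Irrational w)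
    (hd : ∀ k, mDigit v k = mDigit w k) : v = w := by
  by_contra hne
  set e : ℕ → ℝ := fun k => |mIter v k - mIter w k| with he
  have habs : ∀ k, e k < 1 := by
    intro k
    have h1 := mIter_mem_Ioo hv k
    have h2 := mIter_mem_Ioo hw k
    rw [hd k] at h1
    rw [he]
    simp only
    rw [abs_lt]
    constructor <;> [linarith [h1.1, h2.2]; linarith [h1.2, h2.1]]
  have hrel : ∀ k, (mIter v k - mIter w k) * (mIter v (k+1) * mIter w (k+1))
      = mIter v (k+1) - mIter w (k+1) := by
    intro k
    have hv' : mIter v (k+1) = ((mDigit v k : ℝ) - mIter v k)⁻¹ := mIter_succ v k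
    have hw' : mIter w (k+1) = ((mDigit v k : ℝ) - mIter w k)⁻¹ := by
      rw [hd k]; exact mIter_succ w k
    have hnv : (mDigit v k : ℝ) - mIter v k ≠ 0 :=
      ne_of_gt (ceil_sub_pos (irrational_mIter hv k))
    have hnw : (mDigit v k : ℝ) - mIter w k ≠ 0 := by
      rw [hd k]; exact ne_of_gt (ceil_sub_pos (irrational_mIter hw k))
    rw [hv', hw']
    field_simp
    ring
  have hestep : ∀ k, e (k+1) = e k * (mIter v (k+1) * mIter w (k+1)) := by
    intro k
    have h1 := one_lt_mIter hv (Nat.le_add_left 1 k)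
    have h2 := one_lt_mIter hw (Nat.le_add_left 1 k)
    rw [he]
    simp only
    rw [← hrel k, abs_mul,
      abs_of_pos (by nlinarith : (0:ℝ) < mIter v (k+1) * mIter w (k+1))]
  have hstep : ∀ k, e k * (1 + e k) ≤ e (k+1) := by
    intro k
    have hV := one_lt_mIter hv (Nat.le_add_left 1 k)
    have hW := one_lt_mIter hw (Nat.le_add_left 1 k)
    have hp := hestep k
    have hek0 : 0 ≤ e k := abs_nonneg _
    have hmon : e k ≤ e (k+1) := by
      rw [hp]
      nlinarith [mul_le_mul_of_nonneg_left
        (by nlinarith : (1:ℝ) ≤ mIter v (k+1) * mIter w (k+1)) hek0]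
    have key : 1 + e k ≤ mIter v (k+1) * mIter w (k+1) := by
      have habs1 : |mIter v (k+1) - mIter w (k+1)| = e (k+1) := rfl
      rcases abs_cases (mIter v (k+1) - mIter w (k+1)) with ⟨h1, _⟩ | ⟨h1, _⟩ <;>
        rw [habs1] at h1
      · nlinarith [mul_nonneg (by linarith : (0:ℝ) ≤ mIter v (k+1) + 1)
          (by linarith : (0:ℝ) ≤ mIter w (k+1) - 1)]
      · nlinarith [mul_nonneg (by linarith : (0:ℝ) ≤ mIter w (k+1) + 1)
          (by linarith : (0:ℝ) ≤ mIter v (k+1) - 1)]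
    calc e k * (1 + e k) ≤ e k * (mIter v (k+1) * mIter w (k+1)) :=
          mul_le_mul_of_nonneg_left key hek0
      _ = e (k+1) := hp.symm
  have he0 : 0 < e 0 := by
    rw [he]
    simp only [mIter_zero]
    exact abs_pos.mpr (sub_ne_zero.mpr hne)
  exact growth_contra e he0 habs hstep

noncomputable def mMat (w : ℝ) : ℕ → ℤ × ℤ × ℤ × ℤ
  | 0 => (1, 0, 0, 1)
  | (k+1) =>
    let M := mMat w k
    (M.2.2.1, M.2.2.2, mDigit w k * M.2.2.1 - M.1, mDigit w k * M.2.2.2 - M.2.1)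

lemma mMat_det (w : ℝ) : ∀ k, (mMat w k).1 * (mMat w k).2.2.2
    - (mMat w k).2.1 * (mMat w k).2.2.1 = 1 := by
  intro k
  induction k with
  | zero => simp [mMat]
  | succ k ih =>
    simp only [mMat]
    ring_nf
    ring_nf at ih
    linarith [ih]

lemma mMat_rel {w : ℝ} (hw : Irrational w) : ∀ k,
    (((mMat w k).2.2.1 : ℝ) * w + ((mMat w k).2.2.2 : ℝ) ≠ 0) ∧
    mIter w k * (((mMat w k).2.2.1 : ℝ) * w + ((mMat w k).2.2.2 : ℝ))
      = ((mMat w k).1 : ℝ) * w + ((mMat w k).2.1 : ℝ) := by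
  intro k
  induction k with
  | zero =>
    constructor
    · norm_num [mMat]
    · simp [mMat, mIter_zero]
  | succ k ih =>
    obtain ⟨hden, hrel⟩ := ih
    have ht : ((mDigit w k : ℝ) - mIter w k) ≠ 0 :=
      ne_of_gt (ceil_sub_pos (irrational_mIter hw k))
    have hsucc : mIter w (k+1) = ((mDigit w k : ℝ) - mIter w k)⁻¹ := mIter_succ w k
    have hnewden : (((mMat w (k+1)).2.2.1 : ℝ) * w + ((mMat w (k+1)).2.2.2 : ℝ))
        = (((mMat w k).2.2.1 : ℝ) * w + ((mMat w k).2.2.2 : ℝ))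
          * ((mDigit w k : ℝ) - mIter w k) := by
      simp only [mMat]
      push_cast
      have := hrel
      nlinarith [hrel]
    constructor
    · rw [hnewden]
      exact mul_ne_zero hden ht
    · rw [hnewden, hsucc]
      have hnewnum : ((mMat w (k+1)).1 : ℝ) * w + ((mMat w (k+1)).2.1 : ℝ)
          = ((mMat w k).2.2.1 : ℝ) * w + ((mMat w k).2.2.2 : ℝ) := by
        simp only [mMat]
      rw [hnewnum]
      field_simp

lemma mMat_c {w : ℝ} (h2 : ∀ k, 2 ≤ mDigit w k) : ∀ k, 1 ≤ k →
    (mMat w k).2.2.1 ≤ -1 ∧ (mMat w k).2.2.1 ≤ (mMat w k).1 ∧ (mMat w k).1 ≤ 0 := by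
  intro k
  induction k with
  | zero => omega
  | succ k ih =>
    intro _
    by_cases hk : 1 ≤ k
    · obtain ⟨h1', h2', h3'⟩ := ih hk
      have hb := h2 k
      simp only [mMat]
      have hmul : mDigit w k * (mMat w k).2.2.1 ≤ 2 * (mMat w k).2.2.1 := by
        nlinarith
      refine ⟨by omega, by omega, by omega⟩
    · have hk0 : k = 0 := by omega
      subst hk0
      refine ⟨?_, ?_, ?_⟩ <;> simp [mMat] <;> omega

lemma reverse_dir (x : ℝ) (h1 : ∀ i, 1 ≤ i → 2 ≤ mDigit x i)
    (N p : ℕ) (hp : 0 < p) (hper : ∀ i, N ≤ i → mDigit x (i + p) = mDigit x i) :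
    Irrational x ∧ ∃ a b c : ℤ, a ≠ 0 ∧
      (a : ℝ) * x ^ 2 + (b : ℝ) * x + (c : ℝ) = 0 := by
  have hx : Irrational x := by
    by_contra h
    obtain ⟨i, hi1, hi0⟩ := exists_digit_zero_of_not_irrational h
    have := h1 i hi1
    omega
  refine ⟨hx, ?_⟩
  set N' : ℕ := N + 1 with hN'
  set w : ℝ := mIter x N' with hwdef
  have hwirr : Irrational w := irrational_mIter hx N'
  have hdig : ∀ k, 2 ≤ mDigit w k := by
    intro k
    rw [hwdef, ← mDigit_add]
    exact h1 (N' + k) (by omega)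
  have hww : mIter w p = w := by
    apply eq_of_mDigit_eq (irrational_mIter hwirr p) hwirr
    intro k
    have e1 : mDigit (mIter w p) k = mDigit x (N' + p + k) := by
      rw [hwdef, ← mDigit_add, ← mDigit_add]
      congr 1
      omega
    have e2 : mDigit w k = mDigit x (N' + k) := by
      rw [hwdef, ← mDigit_add]
    rw [e1, e2]
    have h3 := hper (N' + k) (by omega)
    rw [show N' + k + p = N' + p + k by ring] at h3
    exact h3
  set a : ℤ := (mMat w p).1 with ha
  set b : ℤ := (mMat w p).2.1 with hb
  set c : ℤ := (mMat w p).2.2.1 with hc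
  set d : ℤ := (mMat w p).2.2.2 with hd
  have hrelp := (mMat_rel hwirr p).2
  rw [hww] at hrelp
  have hcneg : c ≤ -1 := (mMat_c hdig p hp).1
  have hquad : (c:ℝ)*w^2 + ((d:ℝ) - (a:ℝ))*w - (b:ℝ) = 0 := by
    rw [← ha, ← hb, ← hc, ← hd] at hrelp
    linear_combination hrelp
  set A : ℤ := (mMat x N').1 with hA
  set B : ℤ := (mMat x N').2.1 with hB
  set C : ℤ := (mMat x N').2.2.1 with hC
  set D : ℤ := (mMat x N').2.2.2 with hD
  have hMx := (mMat_rel hx N').2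
  rw [← hwdef, ← hA, ← hB, ← hC, ← hD] at hMx
  have hdet : A * D - B * C = 1 := mMat_det x N'
  set P : ℤ := c*A^2 + (d-a)*A*C - b*C^2 with hPdef
  set Q : ℤ := 2*c*A*B + (d-a)*(A*D+B*C) - 2*b*C*D with hQdef
  set R : ℤ := c*B^2 + (d-a)*B*D - b*D^2 with hRdef
  have hPQR : (P:ℝ)*x^2 + (Q:ℝ)*x + (R:ℝ) = 0 := by
    rw [hPdef, hQdef, hRdef]
    push_cast
    linear_combination (((C:ℝ)*x + (D:ℝ))^2) * hquad
      - ((c:ℝ)*(((A:ℝ)*x+(B:ℝ)) + w*((C:ℝ)*x+(D:ℝ))) + ((d:ℝ)-(a:ℝ))*((C:ℝ)*x+(D:ℝ))) * hMx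
  have hPne : P ≠ 0 := by
    intro hP0
    have hQ0 : Q = 0 := by
      by_contra hQ0
      have hQx : (Q:ℝ) * x = -(R:ℝ) := by
        rw [hP0] at hPQR
        push_cast at hPQR
        linarith
      apply hx
      refine ⟨(-(R:ℚ))/(Q:ℚ), ?_⟩
      have hQR : ((Q:ℤ):ℝ) ≠ 0 := Int.cast_ne_zero.mpr hQ0
      push_cast
      rw [div_eq_iff hQR]
      linarith
    have hR0 : R = 0 := by
      have hR0' : (R:ℝ) = 0 := by
        rw [hP0, hQ0] at hPQR
        push_cast at hPQR
        linarith
      exact_mod_cast hR0'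
    have hkey : c*(A*D - B*C)^2 = P*D^2 - Q*(C*D) + R*C^2 := by
      rw [hPdef, hQdef, hRdef]
      ring
    rw [hP0, hQ0, hR0, hdet] at hkey
    simp at hkey
    omega
  exact ⟨P, Q, R, hPne, hPQR⟩

noncomputable def mForm (x : ℝ) (f : ℤ × ℤ × ℤ) : ℕ → ℤ × ℤ × ℤ
  | 0 => f
  | (n+1) =>
    let F := mForm x f n
    let B := mDigit x n
    (F.1*B^2 + F.2.1*B + F.2.2, -(2*F.1*B + F.2.1), F.1)

lemma mForm_succ (x : ℝ) (f : ℤ × ℤ × ℤ) (n : ℕ) : mForm x f (n+1) =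
    ((mForm x f n).1*(mDigit x n)^2 + (mForm x f n).2.1*(mDigit x n) + (mForm x f n).2.2,
     -(2*(mForm x f n).1*(mDigit x n) + (mForm x f n).2.1), (mForm x f n).1) := rfl

noncomputable def sC (x : ℝ) (f : ℤ × ℤ × ℤ) (n : ℕ) : ℝ :=
  -(((mForm x f n).2.1 : ℝ)/((mForm x f n).1 : ℝ)) - mIter x n

lemma sC_irrational {x : ℝ} (f : ℤ × ℤ × ℤ) (hx : Irrational x) (n : ℕ) :
    Irrational (sC x f n) := by
  have hwirr := irrational_mIter hx n
  have : sC x f n = ((-((mForm x f n).2.1 : ℚ)/((mForm x f n).1 : ℚ) : ℚ):ℝ) - mIter x n := by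
    rw [sC]; push_cast; ring
  rw [this]
  exact hwirr.ratCast_sub _

lemma mForm_good {x : ℝ} {f : ℤ × ℤ × ℤ} (hx : Irrational x) (hf1 : f.1 ≠ 0)
    (heq : (f.1:ℝ)*x^2 + (f.2.1:ℝ)*x + (f.2.2:ℝ) = 0) : ∀ n,
    (mForm x f n).1 ≠ 0 ∧
    ((mForm x f n).1:ℝ)*(mIter x n)^2 + ((mForm x f n).2.1:ℝ)*(mIter x n)
      + ((mForm x f n).2.2:ℝ) = 0 := by
  intro n
  induction n with
  | zero => exact ⟨hf1, by simpa [mIter_zero, mForm] using heq⟩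
  | succ n ih =>
    obtain ⟨hα, heqn⟩ := ih
    have hwirr := irrational_mIter hx n
    have hbw : (mDigit x n : ℝ) - mIter x n ≠ 0 := ne_of_gt (ceil_sub_pos hwirr)
    have hinv : mIter x (n+1) * ((mDigit x n : ℝ) - mIter x n) = 1 := by
      rw [mIter_succ]
      field_simp
    have hαR : ((mForm x f n).1:ℝ) ≠ 0 := Int.cast_ne_zero.mpr hα
    have hsirr : Irrational (sC x f n) := sC_irrational f hx n
    have hβs : ((mForm x f n).2.1:ℝ) = -((mForm x f n).1:ℝ)*(mIter x n + sC x f n) := by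
      rw [sC]
      field_simp
      ring
    have hγs : ((mForm x f n).2.2:ℝ) = ((mForm x f n).1:ℝ)*(mIter x n)*(sC x f n) := by
      have heqn' := heqn
      rw [hβs] at heqn'
      linear_combination heqn'
    have hbs : (mDigit x n : ℝ) - sC x f n ≠ 0 := by
      intro h
      exact hsirr.ne_int (mDigit x n) (by linarith)
    have hfact : (((mForm x f n).1*(mDigit x n)^2 + (mForm x f n).2.1*(mDigit x n)
        + (mForm x f n).2.2 : ℤ):ℝ)
        = ((mForm x f n).1:ℝ)*((mDigit x n : ℝ) - mIter x n)*((mDigit x n : ℝ) - sC x f n) := by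
      push_cast
      rw [hβs, hγs]
      ring
    have hα' : (mForm x f (n+1)).1 ≠ 0 := by
      rw [mForm_succ]
      intro h0
      have h0' : (mForm x f n).1*(mDigit x n)^2 + (mForm x f n).2.1*(mDigit x n)
          + (mForm x f n).2.2 = 0 := h0
      have : (((mForm x f n).1*(mDigit x n)^2 + (mForm x f n).2.1*(mDigit x n)
          + (mForm x f n).2.2 : ℤ):ℝ) = 0 := by rw [h0']; simp
      rw [hfact] at this
      exact (mul_ne_zero (mul_ne_zero hαR hbw) hbs) this
    refine ⟨hα', ?_⟩
    rw [mForm_succ]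
    push_cast
    linear_combination (mIter x (n+1)^2) * heqn
      + (mIter x (n+1)*(((mForm x f n).1:ℝ)*((mDigit x n:ℝ) + mIter x n)
        + ((mForm x f n).2.1:ℝ)) - ((mForm x f n).1:ℝ)) * hinv

lemma mForm_disc (x : ℝ) (f : ℤ × ℤ × ℤ) : ∀ n,
    (mForm x f n).2.1^2 - 4*(mForm x f n).1*(mForm x f n).2.2
      = f.2.1^2 - 4*f.1*f.2.2 := by
  intro n
  induction n with
  | zero => rfl
  | succ n ih =>
    rw [← ih]
    rw [mForm_succ]
    ring

lemma sC_ne {x : ℝ} {f : ℤ × ℤ × ℤ} (hx : Irrational x) (hf1 : f.1 ≠ 0)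
    (heq : (f.1:ℝ)*x^2 + (f.2.1:ℝ)*x + (f.2.2:ℝ) = 0) (n : ℕ) :
    sC x f n ≠ mIter x n := by
  obtain ⟨hα, heqn⟩ := mForm_good hx hf1 heq n
  have hαR : ((mForm x f n).1:ℝ) ≠ 0 := Int.cast_ne_zero.mpr hα
  intro h
  rw [sC] at h
  have h1 : -((mForm x f n).2.1:ℝ)/((mForm x f n).1:ℝ) = 2 * mIter x n := by
    rw [neg_div]
    linarith
  have h2 := (div_eq_iff hαR).mp h1
  apply irrational_mIter hx n
  refine ⟨-((mForm x f n).2.1:ℚ)/(2*((mForm x f n).1:ℚ)), ?_⟩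
  have h2α : (2:ℝ)*((mForm x f n).1:ℝ) ≠ 0 := by
    simpa using hαR
  push_cast
  rw [div_eq_iff h2α]
  linarith

lemma sC_succ {x : ℝ} {f : ℤ × ℤ × ℤ} (hx : Irrational x) (hf1 : f.1 ≠ 0)
    (heq : (f.1:ℝ)*x^2 + (f.2.1:ℝ)*x + (f.2.2:ℝ) = 0) (n : ℕ) :
    sC x f (n+1) = ((mDigit x n : ℝ) - sC x f n)⁻¹ := by
  obtain ⟨hα, heqn⟩ := mForm_good hx hf1 heq n
  obtain ⟨hα', _⟩ := mForm_good hx hf1 heq (n+1)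
  have hαR : ((mForm x f n).1:ℝ) ≠ 0 := Int.cast_ne_zero.mpr hα
  have hα'R : ((mForm x f (n+1)).1:ℝ) ≠ 0 := Int.cast_ne_zero.mpr hα'
  have hwirr := irrational_mIter hx n
  have hsirr : Irrational (sC x f n) := sC_irrational f hx n
  have hbw : (mDigit x n : ℝ) - mIter x n ≠ 0 := ne_of_gt (ceil_sub_pos hwirr)
  have hbs : (mDigit x n : ℝ) - sC x f n ≠ 0 := by
    intro h
    exact hsirr.ne_int (mDigit x n) (by linarith)
  have hinv : mIter x (n+1) * ((mDigit x n : ℝ) - mIter x n) = 1 := by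
    rw [mIter_succ]
    field_simp
  have hβs : ((mForm x f n).2.1:ℝ) = -((mForm x f n).1:ℝ)*(mIter x n + sC x f n) := by
    rw [sC]
    field_simp
    ring
  have hγs : ((mForm x f n).2.2:ℝ) = ((mForm x f n).1:ℝ)*(mIter x n)*(sC x f n) := by
    have heqn' := heqn
    rw [hβs] at heqn'
    linear_combination heqn'
  have hα'fact : ((mForm x f (n+1)).1:ℝ)
      = ((mForm x f n).1:ℝ)*((mDigit x n : ℝ) - mIter x n)*((mDigit x n : ℝ) - sC x f n) := by
    have hr : (mForm x f (n+1)).1 = (mForm x f n).1*(mDigit x n)^2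
        + (mForm x f n).2.1*(mDigit x n) + (mForm x f n).2.2 := rfl
    rw [hr]
    push_cast
    rw [hβs, hγs]
    ring
  have hβ' : ((mForm x f (n+1)).2.1:ℝ)
      = -(2*((mForm x f n).1:ℝ)*(mDigit x n : ℝ) + ((mForm x f n).2.1:ℝ)) := by
    have hr : (mForm x f (n+1)).2.1 = -(2*(mForm x f n).1*(mDigit x n) + (mForm x f n).2.1) := rfl
    rw [hr]
    push_cast
    ring
  have key : (-((mForm x f (n+1)).2.1:ℝ) - mIter x (n+1)*((mForm x f (n+1)).1:ℝ))
      * ((mDigit x n : ℝ) - sC x f n) = ((mForm x f (n+1)).1:ℝ) := by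
    rw [hβ', hα'fact, hβs]
    linear_combination (-((mForm x f n).1:ℝ)*((mDigit x n : ℝ) - sC x f n)^2) * hinv
  have hform : sC x f (n+1)
      = (-((mForm x f (n+1)).2.1:ℝ) - mIter x (n+1)*((mForm x f (n+1)).1:ℝ))
        / ((mForm x f (n+1)).1:ℝ) := by
    rw [sC]
    field_simp
  have hX : sC x f (n+1) * ((mDigit x n : ℝ) - sC x f n) = 1 := by
    rw [hform, div_mul_eq_mul_div, key, div_self hα'R]
  exact eq_inv_of_mul_eq_one_left hX

lemma sC_conj {x : ℝ} {f : ℤ × ℤ × ℤ} (hx : Irrational x) (hf1 : f.1 ≠ 0)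
    (heq : (f.1:ℝ)*x^2 + (f.2.1:ℝ)*x + (f.2.2:ℝ) = 0) (n : ℕ) :
    ((mForm x f n).2.1:ℝ) = -((mForm x f n).1:ℝ)*(mIter x n + sC x f n) ∧
    ((mForm x f n).2.2:ℝ) = ((mForm x f n).1:ℝ)*(mIter x n)*(sC x f n) := by
  obtain ⟨hα, heqn⟩ := mForm_good hx hf1 heq n
  have hαR : ((mForm x f n).1:ℝ) ≠ 0 := Int.cast_ne_zero.mpr hα
  have hβs : ((mForm x f n).2.1:ℝ) = -((mForm x f n).1:ℝ)*(mIter x n + sC x f n) := by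
    rw [sC]
    field_simp
    ring
  refine ⟨hβs, ?_⟩
  have heqn' := heqn
  rw [hβs] at heqn'
  linear_combination heqn'

lemma disc_real {x : ℝ} {f : ℤ × ℤ × ℤ} (hx : Irrational x) (hf1 : f.1 ≠ 0)
    (heq : (f.1:ℝ)*x^2 + (f.2.1:ℝ)*x + (f.2.2:ℝ) = 0) (n : ℕ) :
    ((f.2.1^2 - 4*f.1*f.2.2 : ℤ) : ℝ)
      = ((mForm x f n).1:ℝ)^2 * (mIter x n - sC x f n)^2 := by
  obtain ⟨hβs, hγs⟩ := sC_conj hx hf1 heq n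
  rw [← mForm_disc x f n]
  push_cast
  rw [hβs, hγs]
  ring

lemma exists_sC_lt_one {x : ℝ} {f : ℤ × ℤ × ℤ} (hx : Irrational x) (hf1 : f.1 ≠ 0)
    (heq : (f.1:ℝ)*x^2 + (f.2.1:ℝ)*x + (f.2.2:ℝ) = 0) :
    ∃ m, 1 ≤ m ∧ sC x f m < 1 := by
  by_contra hno
  push_neg at hno
  have hs1 : ∀ m, 1 ≤ m → 1 < sC x f m := by
    intro m hm
    have h1 := hno m hm
    rcases lt_or_eq_of_le h1 with h | h
    · exact h
    · exact absurd (by rw [← h]; norm_num : sC x f m = ((1:ℤ):ℝ))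
        ((sC_irrational f hx m).ne_int 1)
  -- for every m ≥ 1, 0 < b_m - s_m < 1
  have hbs : ∀ m, 1 ≤ m → 0 < (mDigit x m : ℝ) - sC x f m ∧ (mDigit x m : ℝ) - sC x f m < 1 := by
    intro m hm
    have hs' : 1 < sC x f (m+1) := hs1 (m+1) (by omega)
    rw [sC_succ hx hf1 heq m] at hs'
    exact one_lt_inv_iff₀.mp hs'
  set e : ℕ → ℝ := fun k => |mIter x (1+k) - sC x f (1+k)| with he
  have hint : ∀ k, (mDigit x (1+k) : ℝ) - 1 < sC x f (1+k) ∧ sC x f (1+k) < (mDigit x (1+k) : ℝ) := by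
    intro k
    obtain ⟨h1, h2⟩ := hbs (1+k) (by omega)
    constructor <;> linarith
  have habs : ∀ k, e k < 1 := by
    intro k
    obtain ⟨h1, h2⟩ := hint k
    obtain ⟨h3, h4⟩ := mIter_mem_Ioo hx (1+k)
    rw [he]
    simp only
    rw [abs_lt]
    constructor <;> linarith
  have he0 : 0 < e 0 := by
    rw [he]
    simp only
    rw [abs_pos, sub_ne_zero]
    exact fun h => sC_ne hx hf1 heq (1+0) h.symm
  have hstep : ∀ k, e k * (1 + e k) ≤ e (k+1) := by
    intro k
    set m := 1 + k with hm
    have hwirr := irrational_mIter hx m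
    have hu : 0 < (mDigit x m : ℝ) - mIter x m := ceil_sub_pos hwirr
    have hu1 : (mDigit x m : ℝ) - mIter x m < 1 := ceil_sub_lt_one _
    obtain ⟨hv, hv1⟩ := hbs m (by omega)
    -- relation
    have hrel : (mIter x (m+1) - sC x f (m+1)) * (((mDigit x m : ℝ) - mIter x m)
        * ((mDigit x m : ℝ) - sC x f m)) = mIter x m - sC x f m := by
      rw [mIter_succ, sC_succ hx hf1 heq m]
      field_simp
      ring
    have habsrel : e (k+1) * (((mDigit x m : ℝ) - mIter x m)
        * ((mDigit x m : ℝ) - sC x f m)) = e k := by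
      have h1m : 1 + (k+1) = m + 1 := by omega
      rw [he]
      simp only
      rw [h1m, ← abs_of_pos (mul_pos hu hv), ← abs_mul, hrel]
    have huv : ((mDigit x m : ℝ) - mIter x m) * ((mDigit x m : ℝ) - sC x f m) ≤ 1 - e k := by
      have hek : e k = |mIter x m - sC x f m| := by rw [he]
      have hd : ((mDigit x m : ℝ) - mIter x m) - (((mDigit x m : ℝ)) - sC x f m)
          = sC x f m - mIter x m := by ring
      have hek1 := habs k
      rcases abs_cases (mIter x m - sC x f m) with ⟨h1, _⟩ | ⟨h1, _⟩ <;> rw [← hek] at h1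
      · nlinarith [mul_pos hu hv]
      · nlinarith [mul_pos hu hv]
    have hpos : 0 < ((mDigit x m : ℝ) - mIter x m) * ((mDigit x m : ℝ) - sC x f m) :=
      mul_pos hu hv
    have hek0 : 0 ≤ e k := abs_nonneg _
    have hek10 : 0 ≤ e (k+1) := abs_nonneg _
    have h5 : e k ≤ e (k+1) * (1 - e k) := by
      calc e k = e (k+1) * (((mDigit x m : ℝ) - mIter x m) * ((mDigit x m : ℝ) - sC x f m)) :=
            habsrel.symm
        _ ≤ e (k+1) * (1 - e k) := mul_le_mul_of_nonneg_left huv hek10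
    have h6 : e k ≤ e (k+1) := by nlinarith [mul_nonneg hek10 hek0]
    nlinarith [mul_le_mul_of_nonneg_left h6 hek0]
  exact growth_contra e he0 habs hstep

lemma forward_dir (x : ℝ) (hx : Irrational x) (f : ℤ × ℤ × ℤ) (hf1 : f.1 ≠ 0)
    (heq : (f.1:ℝ)*x^2 + (f.2.1:ℝ)*x + (f.2.2:ℝ) = 0) :
    ∃ N p : ℕ, 0 < p ∧ ∀ i, N ≤ i → mDigit x (i + p) = mDigit x i := by
  set D : ℤ := f.2.1^2 - 4*f.1*f.2.2 with hDdef
  -- D > 0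
  have hD0 : 0 < D := by
    have hdr := disc_real hx hf1 heq 0
    have hα0 : ((mForm x f 0).1:ℝ) ≠ 0 := Int.cast_ne_zero.mpr (mForm_good hx hf1 heq 0).1
    have hws : mIter x 0 - sC x f 0 ≠ 0 := sub_ne_zero.mpr (fun h => sC_ne hx hf1 heq 0 h.symm)
    have : (0:ℝ) < (D:ℤ) := by
      rw [hDdef, hdr]
      positivity
    exact_mod_cast this
  -- eventually reduced
  obtain ⟨m, hm1, hmlt⟩ := exists_sC_lt_one hx hf1 heq
  set M := m + 1 with hMdef
  have hpersist : ∀ n, 1 ≤ n → sC x f n < 1 → 0 < sC x f (n+1) ∧ sC x f (n+1) < 1 := by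
    intro n hn hsn
    have hb : 2 ≤ mDigit x n := two_le_mDigit hx hn
    have hbR : (2:ℝ) ≤ (mDigit x n : ℝ) := by exact_mod_cast hb
    have ht : 1 < (mDigit x n : ℝ) - sC x f n := by linarith
    rw [sC_succ hx hf1 heq n]
    constructor
    · positivity
    · rw [inv_lt_one₀ (by linarith)]
      exact ht
  have hred : ∀ n, M ≤ n → 0 < sC x f n ∧ sC x f n < 1 := by
    intro n hn
    induction n, hn using Nat.le_induction with
    | base => exact hpersist m hm1 hmlt
    | succ n hn ih => exact hpersist n (by omega) ih.2
  -- bound on leading coefficient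
  have habound : ∀ n, M ≤ n → 4*|(mForm x f n).1| ≤ D := by
    intro n hn
    have hn1 : 1 ≤ n := by omega
    have hw1 : 1 < mIter x n := one_lt_mIter hx hn1
    obtain ⟨hs0, hs1⟩ := hred n hn
    obtain ⟨hα, heqn⟩ := mForm_good hx hf1 heq n
    have hαR : ((mForm x f n).1:ℝ) ≠ 0 := Int.cast_ne_zero.mpr hα
    obtain ⟨hβs, hγs⟩ := sC_conj hx hf1 heq n
    have hsumid : (((mForm x f n).1 + (mForm x f n).2.1 + (mForm x f n).2.2 : ℤ):ℝ)
        = ((mForm x f n).1:ℝ) * ((1 - mIter x n) * (1 - sC x f n)) := by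
      push_cast
      rw [hβs, hγs]
      ring
    have hsum0 : (mForm x f n).1 + (mForm x f n).2.1 + (mForm x f n).2.2 ≠ 0 := by
      intro h
      rw [h] at hsumid
      rw [Int.cast_zero] at hsumid
      exact (mul_ne_zero hαR (mul_ne_zero
        (ne_of_lt (by linarith : (1:ℝ) - mIter x n < 0))
        (ne_of_gt (by linarith : (0:ℝ) < 1 - sC x f n)))) hsumid.symm
    have h1le : (1:ℝ) ≤ |(((mForm x f n).1 + (mForm x f n).2.1 + (mForm x f n).2.2 : ℤ):ℝ)| := by
      have : (1:ℤ) ≤ |(mForm x f n).1 + (mForm x f n).2.1 + (mForm x f n).2.2| :=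
        Int.one_le_abs hsum0
      rw [← Int.cast_abs]
      exact_mod_cast this
    have hA1 : 1 ≤ |((mForm x f n).1:ℝ)| * ((mIter x n - 1) * (1 - sC x f n)) := by
      rw [hsumid, abs_mul, abs_mul] at h1le
      rw [abs_of_neg (by linarith : (1:ℝ) - mIter x n < 0),
        abs_of_pos (by linarith : (0:ℝ) < 1 - sC x f n)] at h1le
      calc (1:ℝ) ≤ |((mForm x f n).1:ℝ)| * (-(1 - mIter x n) * (1 - sC x f n)) := h1le
        _ = |((mForm x f n).1:ℝ)| * ((mIter x n - 1) * (1 - sC x f n)) := by ring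
    have hAM : (mIter x n - 1) * (1 - sC x f n) ≤ (mIter x n - sC x f n)^2/4 := by
      nlinarith [sq_nonneg ((mIter x n - 1) - (1 - sC x f n))]
    have hdisc := disc_real hx hf1 heq n
    rw [← hDdef] at hdisc
    have goalR : (4:ℝ)*|((mForm x f n).1:ℝ)| ≤ (D:ℝ) := by
      have h4A : (0:ℝ) ≤ 4*|((mForm x f n).1:ℝ)| := by positivity
      calc (4:ℝ)*|((mForm x f n).1:ℝ)| = (4*|((mForm x f n).1:ℝ)|)*1 := by ring
        _ ≤ (4*|((mForm x f n).1:ℝ)|)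
            * (|((mForm x f n).1:ℝ)| * ((mIter x n - 1) * (1 - sC x f n))) :=
              mul_le_mul_of_nonneg_left hA1 h4A
        _ = (4*(|((mForm x f n).1:ℝ)| * |((mForm x f n).1:ℝ)|))
            * ((mIter x n - 1) * (1 - sC x f n)) := by ring
        _ ≤ (4*(|((mForm x f n).1:ℝ)| * |((mForm x f n).1:ℝ)|))
            * ((mIter x n - sC x f n)^2/4) :=
              mul_le_mul_of_nonneg_left hAM (by positivity)
        _ = (|((mForm x f n).1:ℝ)|)^2 * (mIter x n - sC x f n)^2 := by ring
        _ = ((mForm x f n).1:ℝ)^2 * (mIter x n - sC x f n)^2 := by rw [sq_abs]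
        _ = (D:ℝ) := hdisc.symm
    have goalZ : ((4*|(mForm x f n).1| : ℤ):ℝ) ≤ (D:ℝ) := by
      push_cast
      exact goalR
    exact_mod_cast goalZ
  set K : ℤ := D + D*D + 1 with hKdef
  have hbnd : ∀ n, M + 1 ≤ n →
      mForm x f n ∈ Set.Icc ((-K,-K,-K) : ℤ×ℤ×ℤ) ((K,K,K) : ℤ×ℤ×ℤ) := by
    intro n hn
    obtain ⟨n', rfl⟩ : ∃ n', n = n' + 1 := ⟨n - 1, by omega⟩
    have hγα : (mForm x f (n'+1)).2.2 = (mForm x f n').1 := rfl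
    have hα4 := habound (n'+1) (by omega)
    have hγ4 : 4*|(mForm x f (n'+1)).2.2| ≤ D := by rw [hγα]; exact habound n' (by omega)
    have hdisc := mForm_disc x f (n'+1)
    rw [← hDdef] at hdisc
    have hβsq : (mForm x f (n'+1)).2.1^2 ≤ D + D*D := by
      nlinarith [abs_nonneg (mForm x f (n'+1)).1, abs_nonneg (mForm x f (n'+1)).2.2,
        le_abs_self ((mForm x f (n'+1)).1 * (mForm x f (n'+1)).2.2),
        abs_mul ((mForm x f (n'+1)).1) ((mForm x f (n'+1)).2.2),
        mul_le_mul hα4 hγ4 (by positivity) (by linarith [hD0] : (0:ℤ) ≤ D)]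
    have hβK : |(mForm x f (n'+1)).2.1| ≤ K := by
      nlinarith [mul_self_nonneg (|(mForm x f (n'+1)).2.1| - 1), abs_nonneg (mForm x f (n'+1)).2.1,
        sq_abs (mForm x f (n'+1)).2.1]
    have hDD : (0:ℤ) ≤ D*D := mul_self_nonneg D
    have hαK : |(mForm x f (n'+1)).1| ≤ K := by rw [hKdef]; omega
    have hγK : |(mForm x f (n'+1)).2.2| ≤ K := by rw [hKdef]; omega
    rw [Set.mem_Icc]
    obtain ⟨ha1, ha2⟩ := abs_le.mp hαK
    obtain ⟨hb1, hb2⟩ := abs_le.mp hβK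
    obtain ⟨hc1, hc2⟩ := abs_le.mp hγK
    exact ⟨⟨ha1, hb1, hc1⟩, ⟨ha2, hb2, hc2⟩⟩
  -- pigeonhole
  have main : ∀ k l : ℕ, k < l → mForm x f (M+1+k) = mForm x f (M+1+l) →
      ∃ N p : ℕ, 0 < p ∧ ∀ i, N ≤ i → mDigit x (i + p) = mDigit x i := by
    intro k l hkl hform
    set n1 := M+1+k with hn1
    set n2 := M+1+l with hn2
    have hn12 : n1 < n2 := by omega
    -- w n2 is a root of form n1
    obtain ⟨hα1, heq1⟩ := mForm_good hx hf1 heq n1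
    obtain ⟨hα2, heq2⟩ := mForm_good hx hf1 heq n2
    rw [← hform] at heq2
    obtain ⟨hβs, hγs⟩ := sC_conj hx hf1 heq n1
    have hroot : ((mForm x f n1).1:ℝ) * ((mIter x n2 - mIter x n1) * (mIter x n2 - sC x f n1))
        = 0 := by
      rw [mul_comm]
      calc ((mIter x n2 - mIter x n1) * (mIter x n2 - sC x f n1)) * ((mForm x f n1).1:ℝ)
          = ((mForm x f n1).1:ℝ)*(mIter x n2)^2 + ((mForm x f n1).2.1:ℝ)*(mIter x n2)
            + ((mForm x f n1).2.2:ℝ) := by rw [hβs, hγs]; ring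
        _ = 0 := heq2
    have hw2 : 1 < mIter x n2 := one_lt_mIter hx (by omega)
    have hs1 : sC x f n1 < 1 := (hred n1 (by omega)).2
    have hαR : ((mForm x f n1).1:ℝ) ≠ 0 := Int.cast_ne_zero.mpr hα1
    have hfac2 : mIter x n2 - sC x f n1 ≠ 0 := ne_of_gt (by linarith)
    have hww : mIter x n1 = mIter x n2 := by
      rcases mul_eq_zero.mp hroot with h | h
      · exact absurd h hαR
      · rcases mul_eq_zero.mp h with h' | h'
        · linarith [sub_eq_zero.mp h']
        · exact absurd h' hfac2
    refine ⟨n1, l - k, by omega, ?_⟩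
    intro i hi
    have hj : i = n1 + (i - n1) := by omega
    have hip : i + (l - k) = n2 + (i - n1) := by omega
    rw [hip, hj, mDigit_add, mDigit_add, ← hww]
    congr 1
    omega
  obtain ⟨k, -, l, -, hkl, hFkl⟩ :=
    Set.Infinite.exists_ne_map_eq_of_mapsTo (Set.infinite_univ (α := ℕ))
      (fun k _ => hbnd (M+1+k) (by omega) :
        Set.MapsTo (fun k => mForm x f (M+1+k)) Set.univ
          (Set.Icc ((-K,-K,-K) : ℤ×ℤ×ℤ) ((K,K,K) : ℤ×ℤ×ℤ)))
      (Set.finite_Icc _ _)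
  rcases hkl.lt_or_gt with h | h
  · exact main k l h hFkl
  · exact main l k h hFkl.symm

theorem stmt_12 (x : ℝ) :
    (Irrational x ∧ ∃ a b c : ℤ, a ≠ 0 ∧
        (a : ℝ) * x ^ 2 + (b : ℝ) * x + (c : ℝ) = 0) ↔
      ((∀ i, 1 ≤ i → 2 ≤ mDigit x i) ∧
        ∃ N p : ℕ, 0 < p ∧ ∀ i, N ≤ i → mDigit x (i + p) = mDigit x i) := by
  constructor
  · rintro ⟨hx, a, b, c, ha, heq⟩
    exact ⟨fun i hi => two_le_mDigit hx hi, forward_dir x hx (a, b, c) ha heq⟩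
  · rintro ⟨h1, N, p, hp, hper⟩
    exact reverse_dir x h1 N p hp hper
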